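/- Let d be a positive integer and let G be a countable graph with all vertex degrees at most d. If G is uniformly amenable, then G is uniformly Følner. -/

import Mathlib

open scoped ENNReal
open MeasureTheory

namespace AFPaper

variable {V : Type*} {W : Type*}

/-- The ball of radius `r` around `x` in the graph `G`. -/
def gball (G : SimpleGraph V) (x : V) (r : ℕ) : Set V :=
  {y | G.Reachable x y ∧ G.dist x y ≤ r}

/-- All vertex degrees of `G` are at most `d`. -/
def DegLE (G : SimpleGraph V) (d : ℕ) : Prop :=
  ∀ v : V, (G.neighborSet v).Finite ∧ (G.neighborSet v).ncard ≤ d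

/-- The boundary of `F` inside the induced subgraph on the ambient set `L`:
vertices of `F` adjacent (in `G`) to some vertex of `L` outside `F`. -/
def boundaryIn (G : SimpleGraph V) (L F : Set V) : Set V :=
  {x ∈ F | ∃ y ∈ L \ F, G.Adj x y}

/-- The boundary of `F` in `G`. -/
def boundary (G : SimpleGraph V) (F : Set V) : Set V :=
  boundaryIn G Set.univ F

/-- `F` is an `ε`-Følner set with respect to the induced subgraph on `L`. -/
def IsFolnerIn (G : SimpleGraph V) (L : Set V) (ε : ℝ) (F : Set V) : Prop :=
  F.Finite ∧ ((boundaryIn G L F).ncard : ℝ) < ε * (F.ncard : ℝ)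

/-- `F` is an `ε`-Følner set in `G`. -/
def IsFolner (G : SimpleGraph V) (ε : ℝ) (F : Set V) : Prop :=
  IsFolnerIn G Set.univ ε F

/-- The set `F` has diameter at most `r` in `G`. -/
def DiamLE (G : SimpleGraph V) (r : ℕ) (F : Set V) : Prop :=
  ∀ x ∈ F, ∀ y ∈ F, G.Reachable x y ∧ G.dist x y ≤ r

/-- The connected component of `x` in the subgraph of `G` induced on `S`. -/
def componentIn (G : SimpleGraph V) (S : Set V) (x : V) : Set V :=
  {y | ∃ (hx : x ∈ S) (hy : y ∈ S), (G.induce S).Reachable ⟨x, hx⟩ ⟨y, hy⟩}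

/-- All connected components of the subgraph induced on `S` have size at most `k`. -/
def SmallComponents (G : SimpleGraph V) (S : Set V) (k : ℕ) : Prop :=
  ∀ x ∈ S, (componentIn G S x).Finite ∧ (componentIn G S x).ncard ≤ k

/-- A witness for Property A with accuracy `ε` and radius `r`. -/
def PropertyAWith (G : SimpleGraph V) (ε : ℝ) (r : ℕ) : Prop :=
  ∃ Θ : V → V → ℝ,
    (∀ x, (Function.support (Θ x)).Finite) ∧
    (∀ x y, 0 ≤ Θ x y) ∧
    (∀ x, (∑ᶠ y, Θ x y) = 1) ∧
    (∀ x y, Θ x y ≠ 0 → y ∈ gball G x r) ∧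
    (∀ x y, G.Adj x y → (∑ᶠ z, |Θ x z - Θ y z|) < ε)

/-- Property A for graphs. -/
def PropertyA (G : SimpleGraph V) : Prop :=
  ∀ ε : ℝ, 0 < ε → ∃ r : ℕ, 1 ≤ r ∧ PropertyAWith G ε r

/-- Uniform local amenability. -/
def UniformlyLocallyAmenable (G : SimpleGraph V) : Prop :=
  ∀ ε : ℝ, 0 < ε → ∃ k : ℕ, 0 < k ∧
    ∀ L : Set V, L.Finite → L.Nonempty →
      ∃ M : Set V, M ⊆ L ∧ M.Nonempty ∧ M.ncard ≤ k ∧ IsFolnerIn G L ε M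

/-- Local hyperfiniteness. -/
def LocallyHyperfinite (G : SimpleGraph V) : Prop :=
  ∀ ε : ℝ, 0 < ε → ∃ k : ℕ, 0 < k ∧
    ∀ L : Set V, L.Finite → L.Nonempty →
      ∃ L' : Set V, L' ⊆ L ∧ ((L'.ncard : ℝ) < ε * (L.ncard : ℝ)) ∧
        SmallComponents G (L \ L') k

/-- Weighted hyperfiniteness. -/
def WeightedHyperfinite (G : SimpleGraph V) : Prop :=
  ∀ ε : ℝ, 0 < ε → ∃ k : ℕ, 0 < k ∧
    ∀ w : V → ℝ, (Function.support w).Finite → (∀ x, 0 ≤ w x) →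
      ∃ L : Set V, (∑ᶠ x ∈ L, w x) ≤ ε * (∑ᶠ x, w x) ∧ SmallComponents G Lᶜ k

/-- `Y` is a `k`-separator: deleting `Y` leaves components of size at most `k`. -/
def IsSeparator (G : SimpleGraph V) (k : ℕ) (Y : Set V) : Prop :=
  SmallComponents G Yᶜ k

/-- The space of `k`-separators, as a subspace of `V → Bool` (product of discrete
spaces); its Borel σ-algebra coincides with the induced product σ-algebra used here. -/
abbrev SepSpace (G : SimpleGraph V) (k : ℕ) :=
  {f : V → Bool // IsSeparator G k {x | f x = true}}

/-- Strong hyperfiniteness. -/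
def StronglyHyperfinite (G : SimpleGraph V) : Prop :=
  ∀ ε : ℝ, 0 < ε → ∃ k : ℕ, 0 < k ∧
    ∃ μ : Measure (SepSpace G k), μ Set.univ = 1 ∧
      ∀ x : V, μ {Y : SepSpace G k | Y.1 x = true} < ENNReal.ofReal ε

/-- An `(ε,r)`-Følner packing, encoded as a partial equivalence relation
`p : V → V → Bool` ("being in the same member of the packing"); the classes are the
members of the packing, and `p x x = false` exactly when `x` is not covered. -/
structure IsPacking (G : SimpleGraph V) (ε : ℝ) (r : ℕ) (p : V → V → Bool) : Prop where
  symm : ∀ x y, p x y = true → p y x = true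
  trans : ∀ x y z, p x y = true → p y z = true → p x z = true
  folner : ∀ x, p x x = true → IsFolner G ε {y | p x y = true}
  diam : ∀ x, p x x = true → DiamLE G r {y | p x y = true}

/-- The space of `(ε,r)`-packings of `G`, as a subspace of `V → V → Bool`. -/
abbrev PackingSpace (G : SimpleGraph V) (ε : ℝ) (r : ℕ) :=
  {p : V → V → Bool // IsPacking G ε r p}

/-- Strong Følner hyperfiniteness. -/
def StronglyFolnerHyperfinite (G : SimpleGraph V) : Prop :=
  ∀ ε : ℝ, 0 < ε → ∃ r : ℕ, 1 ≤ r ∧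
    ∃ ν : Measure (PackingSpace G ε r), ν Set.univ = 1 ∧
      ∀ x : V, ENNReal.ofReal (1 - ε) < ν {P : PackingSpace G ε r | P.1 x x = true}

/-- A packing is a tiling when it covers every vertex. -/
def IsTiling (p : V → V → Bool) : Prop := ∀ x, p x x = true

/-- Strong almost finiteness. -/
def StronglyAlmostFinite (G : SimpleGraph V) : Prop :=
  ∀ ε : ℝ, 0 < ε → ∃ r : ℕ, 1 ≤ r ∧
    ∃ ν : Measure (PackingSpace G ε r), ν Set.univ = 1 ∧
      ν {P : PackingSpace G ε r | IsTiling P.1} = 1 ∧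
      ∀ x : V, ν {P : PackingSpace G ε r | x ∈ boundary G {y | P.1 x y = true}} <
        ENNReal.ofReal ε

/-- Almost finiteness: `V(G)` can be tiled by `ε`-Følner sets of diameter at most `r`. -/
def AlmostFinite (G : SimpleGraph V) : Prop :=
  ∀ ε : ℝ, 0 < ε → ∃ r : ℕ, ∃ T : Set (Set V),
    (∀ F ∈ T, IsFolner G ε F ∧ DiamLE G r F) ∧
    T.PairwiseDisjoint id ∧ ⋃₀ T = Set.univ

/-- Uniform amenability. -/
def UniformlyAmenable (G : SimpleGraph V) : Prop :=
  ∀ ε : ℝ, 0 < ε → ∃ r : ℕ, ∀ x : V, ∃ F : Set V, F ⊆ gball G x r ∧ IsFolner G ε F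

/-- The `r`-neighborhood of a set `L`. -/
def setBall (G : SimpleGraph V) (L : Set V) (r : ℕ) : Set V :=
  ⋃ x ∈ L, gball G x r

/-- The uniform Følner property. -/
def UniformlyFolner (G : SimpleGraph V) : Prop :=
  ∀ ε : ℝ, 0 < ε → ∃ r : ℕ, 1 < r ∧
    ∀ L : Set V, L.Finite → L.Nonempty →
      ∃ H : Set V, L ⊆ H ∧ H ⊆ setBall G L r ∧ IsFolner G ε H

/-- The Følner sum `Σ_x Σ_{y ∼ x} |f(x) − f(y)|`. -/
noncomputable def FolnerSum (G : SimpleGraph V) (f : V → ℝ) : ℝ :=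
  ∑ᶠ x, ∑ᶠ y ∈ G.neighborSet x, |f x - f y|

/-- `f` is an `ε`-Følner function. -/
def IsFolnerFun (G : SimpleGraph V) (ε : ℝ) (f : V → ℝ) : Prop :=
  (Function.support f).Finite ∧ (∀ x, 0 ≤ f x) ∧ f ≠ 0 ∧
    FolnerSum G f < ε * (∑ᶠ x, f x)

/-- `f` is an `ε`-Følner probability measure. -/
def IsFolnerProb (G : SimpleGraph V) (ε : ℝ) (f : V → ℝ) : Prop :=
  IsFolnerFun G ε f ∧ (∑ᶠ x, f x) = 1

/-- Følner Property A. -/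
def FolnerPropertyA (G : SimpleGraph V) : Prop :=
  ∀ ε : ℝ, 0 < ε → ∃ r : ℕ, 1 ≤ r ∧
    ∃ Θ : V → V → ℝ,
      (∀ x, IsFolnerProb G ε (Θ x)) ∧
      (∀ x y, Θ x y ≠ 0 → y ∈ gball G x r) ∧
      (∀ x y, G.Adj x y → (∑ᶠ z, |Θ x z - Θ y z|) < ε)

/-- The collection of `ε`-Følner sets of diameter at most `r`. -/
def FolnerSets (G : SimpleGraph V) (ε : ℝ) (r : ℕ) : Set (Set V) :=
  {H | IsFolner G ε H ∧ DiamLE G r H}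

/-- Fractional almost finiteness. -/
def FractionallyAlmostFinite (G : SimpleGraph V) : Prop :=
  ∀ ε : ℝ, 0 < ε → ∃ r : ℕ, 1 ≤ r ∧
    ∃ F : Set V → ℝ,
      (∀ H ∈ FolnerSets G ε r, 0 ≤ F H) ∧
      (∀ x : V, ∃ c : ℝ, 0 ≤ c ∧ c < ε ∧
        (∑ᶠ H ∈ {H ∈ FolnerSets G ε r | x ∈ H}, F H) = 1 - c) ∧
      (∀ x : V, (∑ᶠ H ∈ {H ∈ FolnerSets G ε r | x ∈ boundary G H}, F H) < ε)

/-- Subexponential growth: `lim_{r→∞} sup_x log|B_r(x)|/r = 0`. -/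
def SubexpGrowth (G : SimpleGraph V) : Prop :=
  ∀ ε : ℝ, 0 < ε → ∃ R : ℕ, ∀ r : ℕ, R ≤ r → ∀ x : V,
    Real.log ((gball G x r).ncard : ℝ) < ε * (r : ℝ)

/-- The rooted `r`-ball of `G` at `v` is rooted-isomorphic to the rooted `r`-ball of
`H` at `w`. -/
def BallIso (G : SimpleGraph V) (v : V) (H : SimpleGraph W) (w : W) (r : ℕ) : Prop :=
  ∃ (hv : v ∈ gball G v r) (hw : w ∈ gball H w r)
    (φ : ↥(gball G v r) ≃ ↥(gball H w r)),
      φ ⟨v, hv⟩ = ⟨w, hw⟩ ∧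
      ∀ a b : ↥(gball G v r), G.Adj ↑a ↑b ↔ H.Adj ↑(φ a) ↑(φ b)

/-- Neighborhood equivalence of graphs. -/
def NeighborhoodEquiv (G : SimpleGraph V) (H : SimpleGraph W) : Prop :=
  (∀ (r : ℕ) (v : V), ∃ w : W, BallIso G v H w r) ∧
  (∀ (r : ℕ) (w : W), ∃ v : V, BallIso H w G v r)

end AFPaper

namespace AFPaper

section UFAux

variable {V : Type*} {G : SimpleGraph V}

private lemma mem_gball_self (x : V) (r : ℕ) : x ∈ gball G x r :=
  ⟨⟨SimpleGraph.Walk.nil⟩, by simp [SimpleGraph.dist_self]⟩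

private lemma gball_mono {x : V} {r s : ℕ} (h : r ≤ s) : gball G x r ⊆ gball G x s :=
  fun _ hy => ⟨hy.1, hy.2.trans h⟩

private lemma dist_triangle3 {x w v : V} (h1 : G.Reachable x w) (h2 : G.Reachable w v) :
    G.dist x v ≤ G.dist x w + G.dist w v := by
  obtain ⟨p, hp⟩ := h1.exists_walk_length_eq_dist
  obtain ⟨q, hq⟩ := h2.exists_walk_length_eq_dist
  calc G.dist x v ≤ (p.append q).length := SimpleGraph.dist_le _
    _ = G.dist x w + G.dist w v := by rw [SimpleGraph.Walk.length_append, hp, hq]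

private lemma gball_trans {x w v : V} {r s : ℕ} (hw : w ∈ gball G x r)
    (hv : v ∈ gball G w s) : v ∈ gball G x (r + s) :=
  ⟨hw.1.trans hv.1, le_trans (dist_triangle3 hw.1 hv.1) (Nat.add_le_add hw.2 hv.2)⟩

private lemma biUnion_bound {ι β : Type*} (W : Finset ι) (f : ι → Set β)
    (hf : ∀ i ∈ W, (f i).Finite) :
    (⋃ i ∈ W, f i).Finite ∧ (⋃ i ∈ W, f i).ncard ≤ ∑ i ∈ W, (f i).ncard := by
  classical
  induction W using Finset.induction_on with
  | empty => simp
  | @insert a s ha ih =>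
    have hfa := hf a (Finset.mem_insert_self a s)
    have ihs := ih fun i hi => hf i (Finset.mem_insert_of_mem hi)
    rw [Finset.set_biUnion_insert, Finset.sum_insert ha]
    refine ⟨hfa.union ihs.1, le_trans (Set.ncard_union_le _ _) ?_⟩
    exact Nat.add_le_add_left ihs.2 _

private lemma biUnion_card_eq {ι β : Type*} (W : Finset ι) (f : ι → Set β)
    (hf : ∀ i ∈ W, (f i).Finite)
    (hd : ∀ i ∈ W, ∀ j ∈ W, i ≠ j → Disjoint (f i) (f j)) :
    (⋃ i ∈ W, f i).ncard = ∑ i ∈ W, (f i).ncard := by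
  classical
  induction W using Finset.induction_on with
  | empty => simp
  | @insert a s ha ih =>
    have hfa := hf a (Finset.mem_insert_self a s)
    have hfs : ∀ i ∈ s, (f i).Finite := fun i hi => hf i (Finset.mem_insert_of_mem hi)
    have hds : ∀ i ∈ s, ∀ j ∈ s, i ≠ j → Disjoint (f i) (f j) := fun i hi j hj hij =>
      hd i (Finset.mem_insert_of_mem hi) j (Finset.mem_insert_of_mem hj) hij
    have hdisj : Disjoint (f a) (⋃ i ∈ s, f i) := by
      rw [Set.disjoint_left]
      intro z hza hzU
      obtain ⟨i, hi, hzi⟩ := Set.mem_iUnion₂.mp hzU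
      have hne : a ≠ i := fun h => ha (h ▸ hi)
      exact (Set.disjoint_left.mp
        (hd a (Finset.mem_insert_self a s) i (Finset.mem_insert_of_mem hi) hne)) hza hzi
    rw [Finset.set_biUnion_insert, Finset.sum_insert ha,
      Set.ncard_union_eq hdisj hfa (biUnion_bound s f hfs).1, ih hfs hds]

private lemma gball_zero (x : V) : gball G x 0 = {x} := by
  ext y
  constructor
  · rintro ⟨hr, hd0⟩
    have h0 : G.dist x y = 0 := Nat.le_zero.mp hd0
    rcases SimpleGraph.dist_eq_zero_iff_eq_or_not_reachable.mp h0 with h | h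
    · simp [h.symm]
    · exact absurd hr h
  · rintro rfl
    exact mem_gball_self _ 0

private lemma gball_card {d : ℕ} (hdeg : DegLE G d) (x : V) (m : ℕ) :
    (gball G x m).Finite ∧ (gball G x m).ncard ≤ (d + 1) ^ m := by
  classical
  induction m with
  | zero => rw [gball_zero]; simp
  | succ m ih =>
    obtain ⟨hfin, hcard⟩ := ih
    set Bf := hfin.toFinset with hBf
    have hsub : gball G x (m + 1) ⊆ gball G x m ∪ ⋃ u ∈ Bf, G.neighborSet u := by
      rintro y ⟨hr, hdy⟩
      by_cases hle : G.dist x y ≤ m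
      · exact Or.inl ⟨hr, hle⟩
      · have hdxy : G.dist x y = m + 1 := le_antisymm hdy (by omega)
        obtain ⟨p, hp⟩ := hr.symm.exists_walk_length_eq_dist
        have hpl : p.length = m + 1 := by rw [hp, SimpleGraph.dist_comm, hdxy]
        cases p with
        | nil => simp at hpl
        | @cons _ u _ hadj q =>
          have hql : q.length = m := by simpa using hpl
          have hu : u ∈ gball G x m := by
            refine ⟨⟨q.reverse⟩, ?_⟩
            have := SimpleGraph.dist_le q.reverse
            rwa [SimpleGraph.Walk.length_reverse, hql] at this
          refine Or.inr (Set.mem_biUnion (hfin.mem_toFinset.mpr hu) ?_)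
          exact hadj.symm
    have hN := biUnion_bound Bf (fun u => G.neighborSet u) (fun u _ => (hdeg u).1)
    have hfin2 : (gball G x (m + 1)).Finite := (hfin.union hN.1).subset hsub
    refine ⟨hfin2, ?_⟩
    have hBcard : Bf.card = (gball G x m).ncard := by
      rw [hBf, Set.ncard_eq_toFinset_card _ hfin]
    calc (gball G x (m + 1)).ncard
        ≤ (gball G x m ∪ ⋃ u ∈ Bf, G.neighborSet u).ncard :=
          Set.ncard_le_ncard hsub (hfin.union hN.1)
      _ ≤ (gball G x m).ncard + (⋃ u ∈ Bf, G.neighborSet u).ncard := Set.ncard_union_le _ _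
      _ ≤ (d + 1) ^ m + ∑ u ∈ Bf, (G.neighborSet u).ncard := Nat.add_le_add hcard hN.2
      _ ≤ (d + 1) ^ m + Bf.card * d := by
          refine Nat.add_le_add_left ?_ _
          calc ∑ u ∈ Bf, (G.neighborSet u).ncard ≤ ∑ _u ∈ Bf, d :=
                Finset.sum_le_sum fun u _ => (hdeg u).2
            _ = Bf.card * d := by rw [Finset.sum_const, smul_eq_mul]
      _ ≤ (d + 1) ^ m + (d + 1) ^ m * d := by
          refine Nat.add_le_add_left (Nat.mul_le_mul_right _ ?_) _
          rw [hBcard]; exact hcard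
      _ = (d + 1) ^ (m + 1) := by ring

private lemma subset_setBall (L : Set V) (r : ℕ) : L ⊆ setBall G L r :=
  fun x hx => Set.mem_biUnion hx (mem_gball_self x r)

private lemma setBall_mono (L : Set V) {r s : ℕ} (h : r ≤ s) :
    setBall G L r ⊆ setBall G L s := by
  intro v hv
  obtain ⟨x, hx, hvx⟩ := Set.mem_iUnion₂.mp hv
  exact Set.mem_biUnion hx (gball_mono h hvx)

private lemma setBall_finite {d : ℕ} (hdeg : DegLE G d) {L : Set V} (hL : L.Finite) (r : ℕ) :
    (setBall G L r).Finite :=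
  hL.biUnion fun x _ => (gball_card hdeg x r).1

private lemma setBall_zero (L : Set V) : setBall G L 0 = L := by
  ext y
  constructor
  · intro hy
    obtain ⟨x, hx, hyx⟩ := Set.mem_iUnion₂.mp hy
    rw [gball_zero] at hyx
    rwa [hyx]
  · intro hy
    exact subset_setBall L 0 hy

private lemma folner_card_pos {ε : ℝ} {F : Set V} (h : IsFolner G ε F) : 1 ≤ F.ncard := by
  by_contra hc
  push_neg at hc
  have h0 : F.ncard = 0 := by omega
  have := h.2
  rw [h0] at this
  simp only [Nat.cast_zero, mul_zero] at this
  have hge : (0 : ℝ) ≤ ((boundaryIn G Set.univ F).ncard : ℝ) := Nat.cast_nonneg _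
  linarith

private lemma boundary_setBall_le {d : ℕ} (hdeg : DegLE G d) {L : Set V} (hL : L.Finite)
    (j : ℕ) :
    (boundary G (setBall G L j)).ncard ≤
      d * (setBall G L (j + 1) \ setBall G L j).ncard := by
  classical
  have hAfin : (setBall G L (j + 1) \ setBall G L j).Finite :=
    (setBall_finite hdeg hL (j + 1)).diff
  set Af := hAfin.toFinset with hAf
  have hsub : boundary G (setBall G L j) ⊆ ⋃ u ∈ Af, G.neighborSet u := by
    rintro v ⟨hvB, y, ⟨-, hyB⟩, hadj⟩
    have hy1 : y ∈ setBall G L (j + 1) := by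
      obtain ⟨x, hx, hvx⟩ := Set.mem_iUnion₂.mp hvB
      have hdy : y ∈ gball G v 1 := by
        refine ⟨hadj.reachable, ?_⟩
        have := SimpleGraph.dist_le (SimpleGraph.Walk.cons hadj SimpleGraph.Walk.nil)
        simpa using this
      exact Set.mem_biUnion hx (gball_trans hvx hdy)
    refine Set.mem_biUnion (hAfin.mem_toFinset.mpr ⟨hy1, hyB⟩) ?_
    exact hadj.symm
  have hN := biUnion_bound Af (fun u => G.neighborSet u) (fun u _ => (hdeg u).1)
  calc (boundary G (setBall G L j)).ncard
      ≤ (⋃ u ∈ Af, G.neighborSet u).ncard := Set.ncard_le_ncard hsub hN.1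
    _ ≤ ∑ u ∈ Af, (G.neighborSet u).ncard := hN.2
    _ ≤ ∑ _u ∈ Af, d := Finset.sum_le_sum fun u _ => (hdeg u).2
    _ = Af.card * d := by rw [Finset.sum_const, smul_eq_mul]
    _ = d * (setBall G L (j + 1) \ setBall G L j).ncard := by
        rw [hAf, ← Set.ncard_eq_toFinset_card _ hAfin, Nat.mul_comm]

end UFAux

/-- Uniformly amenable graphs are uniformly Følner. -/
theorem uniformlyAmenable_implies_uniformlyFolner
    (d : ℕ) (hd : 0 < d) {V : Type} [Countable V]
    (G : SimpleGraph V) (hdeg : DegLE G d)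
    (hUA : UniformlyAmenable G) :
    UniformlyFolner G := by
  classical
  intro ε hε
  have hε4 : 0 < ε / 4 := by linarith
  obtain ⟨r₀, hr₀⟩ := hUA (ε / 4) hε4
  set r₁ : ℕ := max r₀ 1 with hr₁def
  have hFall : ∀ x : V, ∃ F : Set V, F ⊆ gball G x r₁ ∧ IsFolner G (ε / 4) F := by
    intro x
    obtain ⟨F, hF1, hF2⟩ := hr₀ x
    exact ⟨F, hF1.trans (gball_mono (le_max_left _ _)), hF2⟩
  choose F hFsub hFfol using hFall
  set D : ℕ := (d + 1) ^ (2 * r₁) with hDdef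
  have hDpos : 0 < D := Nat.pow_pos (Nat.succ_pos d)
  have hDR : (1 : ℝ) ≤ (D : ℝ) := by exact_mod_cast hDpos
  have hdR : (0 : ℝ) < (d : ℝ) := by exact_mod_cast hd
  set δ : ℝ := ε / (4 * d) with hδdef
  have hδpos : 0 < δ := by
    rw [hδdef]; positivity
  obtain ⟨t, ht⟩ := pow_unbounded_of_one_lt (R := ℝ) (4 * D / ε) (by linarith : (1 : ℝ) < 1 + δ)
  refine ⟨t + r₁ + 2, by omega, ?_⟩
  intro L hL hLne
  have hBfin : ∀ j : ℕ, (setBall G L j).Finite := fun j => setBall_finite hdeg hL j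
  have hBmono : ∀ j : ℕ, setBall G L j ⊆ setBall G L (j + 1) :=
    fun j => setBall_mono L (by omega)
  by_cases hslow : ∃ j, j < t ∧
      ((setBall G L (j + 1)).ncard : ℝ) < (1 + δ) * ((setBall G L j).ncard : ℝ)
  · -- Case 1 : slow growth at some radius j; the ball itself is Følner.
    obtain ⟨j, hjt, hj⟩ := hslow
    refine ⟨setBall G L j, subset_setBall L j, setBall_mono L (by omega), hBfin j, ?_⟩
    have hb := boundary_setBall_le hdeg hL j
    have hdiff : (((setBall G L (j + 1)) \ setBall G L j).ncard : ℝ)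
        = ((setBall G L (j + 1)).ncard : ℝ) - ((setBall G L j).ncard : ℝ) :=
      Set.cast_ncard_sdiff (hBmono j) (hBfin (j + 1))
    have h2 : ((boundary G (setBall G L j)).ncard : ℝ)
        ≤ (d : ℝ) * (((setBall G L (j + 1)) \ setBall G L j).ncard : ℝ) := by
      exact_mod_cast hb
    have h3 : ((boundary G (setBall G L j)).ncard : ℝ)
        < (d : ℝ) * (δ * ((setBall G L j).ncard : ℝ)) := by
      rw [hdiff] at h2
      have hlt : ((setBall G L (j + 1)).ncard : ℝ) - ((setBall G L j).ncard : ℝ)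
          < δ * ((setBall G L j).ncard : ℝ) := by linarith
      calc ((boundary G (setBall G L j)).ncard : ℝ)
          ≤ (d : ℝ) * (((setBall G L (j + 1)).ncard : ℝ) - ((setBall G L j).ncard : ℝ)) := h2
        _ < (d : ℝ) * (δ * ((setBall G L j).ncard : ℝ)) := by
            exact mul_lt_mul_of_pos_left hlt hdR
    have h4 : (d : ℝ) * δ = ε / 4 := by
      rw [hδdef]; field_simp
    have h5 : ((boundary G (setBall G L j)).ncard : ℝ)
        < (ε / 4) * ((setBall G L j).ncard : ℝ) := by
      calc ((boundary G (setBall G L j)).ncard : ℝ)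
          < (d : ℝ) * (δ * ((setBall G L j).ncard : ℝ)) := h3
        _ = ((d : ℝ) * δ) * ((setBall G L j).ncard : ℝ) := by ring
        _ = (ε / 4) * ((setBall G L j).ncard : ℝ) := by rw [h4]
    have hnn : (0 : ℝ) ≤ ((setBall G L j).ncard : ℝ) := Nat.cast_nonneg _
    exact lt_of_lt_of_le h5 (by nlinarith)
  · -- Case 2 : the balls grow fast; use a net of disjoint Følner sets.
    push_neg at hslow
    have hgrow : ∀ j, j ≤ t →
        ((1 + δ) ^ j) * (L.ncard : ℝ) ≤ ((setBall G L j).ncard : ℝ) := by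
      intro j
      induction j with
      | zero => intro _; simp [setBall_zero]
      | succ n ih =>
        intro hn
        have h1 := ih (by omega)
        have h2 := hslow n (by omega)
        have hpos : (0 : ℝ) ≤ 1 + δ := by linarith
        calc ((1 + δ) ^ (n + 1)) * (L.ncard : ℝ)
            = (1 + δ) * (((1 + δ) ^ n) * (L.ncard : ℝ)) := by ring
          _ ≤ (1 + δ) * ((setBall G L n).ncard : ℝ) := by
              exact mul_le_mul_of_nonneg_left h1 hpos
          _ ≤ ((setBall G L (n + 1)).ncard : ℝ) := h2
    set S : Set V := setBall G L t with hSdef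
    have hSfin : S.Finite := hBfin t
    have hLS : L ⊆ S := subset_setBall L t
    set T : Set (Finset V) := {Wf : Finset V | ↑Wf ⊆ S ∧ ∀ a ∈ Wf, ∀ b ∈ Wf, a ≠ b →
      ¬(G.Reachable a b ∧ G.dist a b ≤ 2 * r₁)} with hTdef
    have hTfin : T.Finite := by
      apply (hSfin.toFinset.powerset.finite_toSet).subset
      intro Wf hWf
      refine Finset.mem_coe.mpr (Finset.mem_powerset.mpr ?_)
      intro x hx
      exact hSfin.mem_toFinset.mpr (hWf.1 hx)
    have hTne : T.Nonempty := ⟨∅, by simp [hTdef]⟩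
    obtain ⟨W, hWT, hWmax⟩ := Set.Finite.exists_maximalFor Finset.card T hTfin hTne
    have hWS : ↑W ⊆ S := hWT.1
    have hWsep := hWT.2
    have hcover : ∀ v ∈ S, ∃ w ∈ W, G.Reachable w v ∧ G.dist w v ≤ 2 * r₁ := by
      intro v hv
      by_cases hvW : v ∈ W
      · exact ⟨v, hvW, ⟨SimpleGraph.Walk.nil⟩, by simp [SimpleGraph.dist_self]⟩
      · have hcard : W.card < (insert v W).card := by
          rw [Finset.card_insert_of_notMem hvW]; omega
        have hnotT : insert v W ∉ T := by
          intro hmem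
          have := hWmax hmem hcard.le
          omega
        have hsubS : ↑(insert v W) ⊆ S := by
          rw [Finset.coe_insert]
          exact Set.insert_subset hv hWS
        have hnsep : ¬(∀ a ∈ insert v W, ∀ b ∈ insert v W, a ≠ b →
            ¬(G.Reachable a b ∧ G.dist a b ≤ 2 * r₁)) := fun hsep => hnotT ⟨hsubS, hsep⟩
        push_neg at hnsep
        obtain ⟨a, ha, b, hb, hab, hR⟩ := hnsep
        rw [Finset.mem_insert] at ha hb
        rcases ha with rfl | haW
        · rcases hb with rfl | hbW
          · exact absurd rfl hab
          · exact ⟨b, hbW, hR.1.symm, by rw [SimpleGraph.dist_comm]; exact hR.2⟩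
        · rcases hb with rfl | hbW
          · exact ⟨a, haW, hR.1, hR.2⟩
          · exact absurd hR (hWsep a haW b hbW hab)
    have hcount : S.ncard ≤ W.card * D := by
      have hsub : S ⊆ ⋃ w ∈ W, gball G w (2 * r₁) := by
        intro v hv
        obtain ⟨w, hw, hR, hd2⟩ := hcover v hv
        exact Set.mem_biUnion hw ⟨hR, hd2⟩
      have hb := biUnion_bound W (fun w => gball G w (2 * r₁))
        (fun w _ => (gball_card hdeg w (2 * r₁)).1)
      calc S.ncard ≤ (⋃ w ∈ W, gball G w (2 * r₁)).ncard := Set.ncard_le_ncard hsub hb.1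
        _ ≤ ∑ w ∈ W, (gball G w (2 * r₁)).ncard := hb.2
        _ ≤ ∑ _w ∈ W, D := Finset.sum_le_sum fun w _ => (gball_card hdeg w (2 * r₁)).2
        _ = W.card * D := by rw [Finset.sum_const, smul_eq_mul]
    set U : Set V := ⋃ w ∈ W, F w with hUdef
    set H : Set V := L ∪ U with hHdef
    have hFfin : ∀ w : V, (F w).Finite := fun w => (hFfol w).1
    have hUb := biUnion_bound W F (fun w _ => hFfin w)
    have hUfin : U.Finite := hUb.1
    have hHfin : H.Finite := hL.union hUfin
    have hdisj : ∀ a ∈ W, ∀ b ∈ W, a ≠ b → Disjoint (F a) (F b) := by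
      intro a ha b hb hab
      rw [Set.disjoint_left]
      intro z hza hzb
      have h1 := hFsub a hza
      have h2 := hFsub b hzb
      refine hWsep a ha b hb hab ⟨h1.1.trans h2.1.symm, ?_⟩
      have htri := dist_triangle3 h1.1 h2.1.symm
      have hza' : G.dist a z ≤ r₁ := h1.2
      have hzb' : G.dist z b ≤ r₁ := by rw [SimpleGraph.dist_comm]; exact h2.2
      omega
    have hUcard : U.ncard = ∑ w ∈ W, (F w).ncard :=
      biUnion_card_eq W F (fun w _ => hFfin w) hdisj
    obtain ⟨x0, hx0⟩ := hLne
    obtain ⟨w0, hw0, -⟩ := hcover x0 (hLS hx0)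
    have hWne : W.Nonempty := ⟨w0, hw0⟩
    -- H is the required set
    refine ⟨H, ?_, ?_, hHfin, ?_⟩
    · exact fun x hx => Or.inl hx
    · -- H ⊆ setBall G L (t + r₁ + 2)
      intro v hv
      rcases hv with hvL | hvU
      · exact subset_setBall L _ hvL
      · obtain ⟨w, hw, hvF⟩ := Set.mem_iUnion₂.mp hvU
        have hwS : w ∈ S := hWS hw
        obtain ⟨x, hx, hwx⟩ := Set.mem_iUnion₂.mp hwS
        have hvx : v ∈ gball G x (t + r₁) := gball_trans hwx (hFsub w hvF)
        exact Set.mem_biUnion hx (gball_mono (by omega) hvx)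
    · -- Følner estimate
      have hbnd : boundaryIn G Set.univ H ⊆ L ∪ ⋃ w ∈ W, boundaryIn G Set.univ (F w) := by
        rintro v ⟨hvH, y, ⟨-, hyH⟩, hadj⟩
        rcases hvH with hvL | hvU
        · exact Or.inl hvL
        · obtain ⟨w, hw, hvF⟩ := Set.mem_iUnion₂.mp hvU
          refine Or.inr (Set.mem_biUnion hw ?_)
          refine ⟨hvF, y, ⟨Set.mem_univ y, fun hyF => hyH (Or.inr (Set.mem_biUnion hw hyF))⟩,
            hadj⟩
      have hbfin : ∀ w : V, (boundaryIn G Set.univ (F w)).Finite :=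
        fun w => (hFfin w).subset (fun z hz => hz.1)
      have hbU := biUnion_bound W (fun w => boundaryIn G Set.univ (F w)) (fun w _ => hbfin w)
      have hbH : (boundaryIn G Set.univ H).ncard
          ≤ L.ncard + ∑ w ∈ W, (boundaryIn G Set.univ (F w)).ncard := by
        calc (boundaryIn G Set.univ H).ncard
            ≤ (L ∪ ⋃ w ∈ W, boundaryIn G Set.univ (F w)).ncard :=
              Set.ncard_le_ncard hbnd (hL.union hbU.1)
          _ ≤ L.ncard + (⋃ w ∈ W, boundaryIn G Set.univ (F w)).ncard :=
              Set.ncard_union_le _ _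
          _ ≤ L.ncard + ∑ w ∈ W, (boundaryIn G Set.univ (F w)).ncard :=
              Nat.add_le_add_left hbU.2 _
      -- real arithmetic
      have hsumlt : (∑ w ∈ W, ((boundaryIn G Set.univ (F w)).ncard : ℝ))
          < ∑ w ∈ W, (ε / 4) * ((F w).ncard : ℝ) :=
        Finset.sum_lt_sum_of_nonempty hWne fun w _ => (hFfol w).2
      have hWleM : (W.card : ℝ) ≤ ∑ w ∈ W, ((F w).ncard : ℝ) := by
        have : ∀ w ∈ W, (1 : ℝ) ≤ ((F w).ncard : ℝ) := by
          intro w _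
          exact_mod_cast folner_card_pos (hFfol w)
        calc (W.card : ℝ) = ∑ _w ∈ W, (1 : ℝ) := by simp
          _ ≤ ∑ w ∈ W, ((F w).ncard : ℝ) := Finset.sum_le_sum this
      have hMU : (∑ w ∈ W, ((F w).ncard : ℝ)) = (U.ncard : ℝ) := by
        rw [hUcard]; push_cast; ring
      have hUH : (U.ncard : ℝ) ≤ (H.ncard : ℝ) := by
        exact_mod_cast Set.ncard_le_ncard (Set.subset_union_right) hHfin
      have hLH : (L.ncard : ℝ) ≤ (H.ncard : ℝ) := by
        exact_mod_cast Set.ncard_le_ncard (Set.subset_union_left) hHfin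
      -- L.ncard ≤ (ε/4) * H.ncard
      have hgt : (4 * (D : ℝ) / ε) * (L.ncard : ℝ) ≤ (S.ncard : ℝ) := by
        have h1 := hgrow t le_rfl
        have h2 : (4 * (D : ℝ) / ε) * (L.ncard : ℝ) ≤ ((1 + δ) ^ t) * (L.ncard : ℝ) :=
          mul_le_mul_of_nonneg_right ht.le (Nat.cast_nonneg _)
        exact h2.trans h1
      have hSW : (S.ncard : ℝ) ≤ (W.card : ℝ) * (D : ℝ) := by exact_mod_cast hcount
      have hLW : (L.ncard : ℝ) ≤ (ε / 4) * (W.card : ℝ) := by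
        have h1 : (4 * (D : ℝ) / ε) * (L.ncard : ℝ) ≤ (W.card : ℝ) * (D : ℝ) :=
          hgt.trans hSW
        have h2 : (4 * (D : ℝ) / ε) * (L.ncard : ℝ) * ε = 4 * (D : ℝ) * (L.ncard : ℝ) := by
          field_simp
        have h3 : 4 * (D : ℝ) * (L.ncard : ℝ) ≤ (W.card : ℝ) * (D : ℝ) * ε := by
          calc 4 * (D : ℝ) * (L.ncard : ℝ) = (4 * (D : ℝ) / ε) * (L.ncard : ℝ) * ε := h2.symm
            _ ≤ (W.card : ℝ) * (D : ℝ) * ε := by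
                exact mul_le_mul_of_nonneg_right h1 hε.le
        have hD0 : (0 : ℝ) < (D : ℝ) := by linarith
        nlinarith [hD0]
      have hLH4 : (L.ncard : ℝ) ≤ (ε / 4) * (H.ncard : ℝ) := by
        have hε40 : (0 : ℝ) ≤ ε / 4 := hε4.le
        calc (L.ncard : ℝ) ≤ (ε / 4) * (W.card : ℝ) := hLW
          _ ≤ (ε / 4) * (H.ncard : ℝ) := by
              apply mul_le_mul_of_nonneg_left _ hε40
              calc (W.card : ℝ) ≤ ∑ w ∈ W, ((F w).ncard : ℝ) := hWleM
                _ = (U.ncard : ℝ) := hMU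
                _ ≤ (H.ncard : ℝ) := hUH
      -- conclude
      have hbHR : ((boundaryIn G Set.univ H).ncard : ℝ)
          ≤ (L.ncard : ℝ) + ∑ w ∈ W, ((boundaryIn G Set.univ (F w)).ncard : ℝ) := by
        exact_mod_cast hbH
      have hsum2 : (∑ w ∈ W, (ε / 4) * ((F w).ncard : ℝ)) ≤ (ε / 4) * (H.ncard : ℝ) := by
        rw [← Finset.mul_sum, hMU]
        exact mul_le_mul_of_nonneg_left hUH hε4.le
      have hHpos : (0 : ℝ) ≤ (H.ncard : ℝ) := Nat.cast_nonneg _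
      calc ((boundaryIn G Set.univ H).ncard : ℝ)
          ≤ (L.ncard : ℝ) + ∑ w ∈ W, ((boundaryIn G Set.univ (F w)).ncard : ℝ) := hbHR
        _ < (L.ncard : ℝ) + ∑ w ∈ W, (ε / 4) * ((F w).ncard : ℝ) := by linarith [hsumlt]
        _ ≤ (ε / 4) * (H.ncard : ℝ) + (ε / 4) * (H.ncard : ℝ) := by linarith [hLH4, hsum2]
        _ = (ε / 2) * (H.ncard : ℝ) := by ring
        _ ≤ ε * (H.ncard : ℝ) := by nlinarith



end AFPaper
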